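/- Let n, s be positive natural numbers, let S be a symmetric n×n real matrix, and let F : ℝⁿ → ℝⁿ satisfy ⟨y, S·F(y)⟩ = 0 for all y ∈ ℝⁿ (so that I(y) = yᵀSy is a quadratic first integral of the ODE y' = F(y)). Let a : Fin s → Fin s → ℝ and b : Fin s → ℝ be Runge–Kutta coefficients satisfying the symplecticity condition bᵢ·aᵢⱼ + bⱼ·aⱼᵢ - bᵢ·bⱼ = 0 for all i, j. Suppose h ∈ ℝ, y₀ ∈ ℝⁿ, and stage values Y : Fin s → ℝⁿ satisfy Yᵢ = y₀ + h·∑ⱼ aᵢⱼ·F(Yⱼ) for every i, and define y₁ = y₀ + h·∑ᵢ bᵢ·F(Yᵢ). Then y₁ᵀ S y₁ = y₀ᵀ S y₀. -/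

import Mathlib

open Matrix Finset in
private lemma dp_sum_right {n s : ℕ} (u : Fin n → ℝ) (g : Fin s → Fin n → ℝ) :
    u ⬝ᵥ (∑ i, g i) = ∑ i, u ⬝ᵥ g i := by
  simp [dotProduct, Finset.sum_apply, Finset.mul_sum]
  exact Finset.sum_comm

open Matrix Finset in
private lemma dp_sum_left {n s : ℕ} (u : Fin n → ℝ) (g : Fin s → Fin n → ℝ) :
    (∑ i, g i) ⬝ᵥ u = ∑ i, g i ⬝ᵥ u := by
  simp [dotProduct, Finset.sum_apply, Finset.sum_mul]
  exact Finset.sum_comm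

open Matrix Finset in
private lemma mv_sum {n s : ℕ} (S : Matrix (Fin n) (Fin n) ℝ) (g : Fin s → Fin n → ℝ) :
    S.mulVec (∑ i, g i) = ∑ i, S.mulVec (g i) := by
  ext x
  simp [mulVec, dotProduct, Finset.sum_apply, Finset.mul_sum]
  exact Finset.sum_comm

open Matrix in
theorem symplectic_RK_preserves_quadratic_first_integral
    (n s : ℕ) (hn : 0 < n) (hs : 0 < s)
    (S : Matrix (Fin n) (Fin n) ℝ) (hS : S.IsSymm)
    (F : (Fin n → ℝ) → (Fin n → ℝ))
    (hF : ∀ y : Fin n → ℝ, y ⬝ᵥ S.mulVec (F y) = 0)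
    (a : Fin s → Fin s → ℝ) (b : Fin s → ℝ)
    (hsymp : ∀ i j, b i * a i j + b j * a j i - b i * b j = 0)
    (h : ℝ) (y₀ : Fin n → ℝ) (Y : Fin s → (Fin n → ℝ))
    (hY : ∀ i, Y i = y₀ + h • ∑ j, a i j • F (Y j))
    (y₁ : Fin n → ℝ)
    (hy₁ : y₁ = y₀ + h • ∑ i, b i • F (Y i)) :
    y₁ ⬝ᵥ S.mulVec y₁ = y₀ ⬝ᵥ S.mulVec y₀ := by
  have qsym : ∀ u v : Fin n → ℝ, u ⬝ᵥ S.mulVec v = v ⬝ᵥ S.mulVec u := fun u v => by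
    rw [dotProduct_mulVec, ← mulVec_transpose, hS.eq, dotProduct_comm]
  set f : Fin s → (Fin n → ℝ) := fun i => F (Y i) with hf
  set q : Fin s → Fin s → ℝ := fun i j => f i ⬝ᵥ S.mulVec (f j) with hq
  have hqsym : ∀ i j, q i j = q j i := fun i j => qsym _ _
  -- stage orthogonality
  have hc : ∀ i, y₀ ⬝ᵥ S.mulVec (f i) = -(h * ∑ j, a i j * q j i) := by
    intro i
    have h0 := hF (Y i)
    nth_rewrite 1 [hY i] at h0
    rw [add_dotProduct, smul_dotProduct, dp_sum_left] at h0
    simp only [smul_dotProduct, smul_eq_mul, ← hf, ← hq] at h0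
    linarith [h0]
  have hc' : ∀ i, f i ⬝ᵥ S.mulVec y₀ = -(h * ∑ j, a i j * q j i) := fun i =>
    (qsym _ _).trans (hc i)
  subst hy₁
  simp only [mulVec_add, mulVec_smul, add_dotProduct, dotProduct_add, smul_dotProduct,
    dotProduct_smul, smul_eq_mul, mv_sum, dp_sum_left, dp_sum_right, Finset.mul_sum,
    ← hf, hc, hc']
  -- now a scalar identity in sums of q
  have key : ∑ i, ∑ j, b i * (b j * q i j) = 2 * ∑ i, ∑ j, b i * (a i j * q j i) := by
    have swap : ∑ i, ∑ j, b j * (a j i * q i j) = ∑ i, ∑ j, b i * (a i j * q j i) :=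
      Finset.sum_comm
    calc ∑ i, ∑ j, b i * (b j * q i j)
        = ∑ i, ∑ j, (b i * a i j + b j * a j i) * q i j := by
          refine Finset.sum_congr rfl fun i _ => Finset.sum_congr rfl fun j _ => ?_
          have e : b i * b j = b i * a i j + b j * a j i := by linarith [hsymp i j]
          rw [← e]; ring
      _ = ∑ i, ∑ j, (b i * (a i j * q j i) + b j * (a j i * q i j)) := by
          refine Finset.sum_congr rfl fun i _ => Finset.sum_congr rfl fun j _ => ?_
          rw [hqsym i j]; ring
      _ = (∑ i, ∑ j, b i * (a i j * q j i)) + ∑ i, ∑ j, b j * (a j i * q i j) := by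
          rw [← Finset.sum_add_distrib]
          exact Finset.sum_congr rfl fun i _ => Finset.sum_add_distrib
      _ = 2 * ∑ i, ∑ j, b i * (a i j * q j i) := by rw [swap]; ring
  have hqdef : ∀ i j, F (Y i) ⬝ᵥ S.mulVec (F (Y j)) = q i j := fun i j => rfl
  simp only [hqdef]
  have hc2 : ∀ i, y₀ ⬝ᵥ S.mulVec (F (Y i)) = -(h * ∑ j, a i j * q j i) := hc
  have hc2' : ∀ i, F (Y i) ⬝ᵥ S.mulVec y₀ = -(h * ∑ j, a i j * q j i) := hc'
  simp only [hc2, hc2', Finset.mul_sum]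
  have eA1 : ∑ i : Fin s, h * (b i * -∑ j : Fin s, h * (a i j * q j i))
      = -(h * h) * ∑ i, ∑ j, b i * (a i j * q j i) := by
    rw [Finset.mul_sum]
    refine Finset.sum_congr rfl fun i _ => ?_
    rw [← Finset.sum_neg_distrib, Finset.mul_sum, Finset.mul_sum, Finset.mul_sum]
    exact Finset.sum_congr rfl fun j _ => by ring
  have eA2 : ∑ x : Fin s, b x * -∑ j : Fin s, h * (a x j * q j x)
      = -h * ∑ i, ∑ j, b i * (a i j * q j i) := by
    rw [Finset.mul_sum]
    refine Finset.sum_congr rfl fun i _ => ?_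
    rw [← Finset.sum_neg_distrib, Finset.mul_sum, Finset.mul_sum]
    exact Finset.sum_congr rfl fun j _ => by ring
  have eB : ∑ x : Fin s, ∑ i : Fin s, h * (b x * (b i * q i x))
      = h * ∑ i, ∑ j, b i * (b j * q i j) := by
    rw [Finset.mul_sum]
    refine Finset.sum_congr rfl fun i _ => ?_
    rw [Finset.mul_sum]
    exact Finset.sum_congr rfl fun j _ => by rw [hqsym j i]
  rw [eA1, eA2, eB, key]
  ring
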